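/- Let A,B,C,D,E ∈ ℝ with Pf := −B² + AC − DE ≠ 0, and let Ω and α be the 4×4 real matrices Ω := !![0,0,1,0; 0,0,0,1; -1,0,0,0; 0,-1,0,0] and α := !![0,E,B,C; -E,0,-A,-B; -B,A,0,D; -C,B,-D,0] (so α is invertible). Then for ε₂, ε₃ ∈ {−1,1}, the equation ε₃•(α⁻¹ * Ω) + ε₂•(Ω⁻¹ * α) = 0 holds if and only if B² − AC + DE = −ε₂·ε₃ (equivalently, Pf = ε₂·ε₃). -/

import Mathlib

/-- coordinate form (3.8) of the anticommutativity condition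
in Proposition 3.9. -/
theorem statement_2 (A B C D E : ℝ) (hPf : -B ^ 2 + A * C - D * E ≠ 0)
    (ε₂ ε₃ : ℝ) (hε₂ : ε₂ = -1 ∨ ε₂ = 1) (hε₃ : ε₃ = -1 ∨ ε₃ = 1) :
    let Ω : Matrix (Fin 4) (Fin 4) ℝ := !![0,0,1,0; 0,0,0,1; -1,0,0,0; 0,-1,0,0]
    let α : Matrix (Fin 4) (Fin 4) ℝ := !![0,E,B,C; -E,0,-A,-B; -B,A,0,D; -C,B,-D,0]
    (ε₃ • (α⁻¹ * Ω) + ε₂ • (Ω⁻¹ * α) = 0 ↔ B ^ 2 - A * C + D * E = -ε₂ * ε₃) := by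
  intro Ω α
  have hΩdef : Ω = !![0,0,1,0; 0,0,0,1; -1,0,0,0; 0,-1,0,0] := rfl
  have hαdef : α = !![0,E,B,C; -E,0,-A,-B; -B,A,0,D; -C,B,-D,0] := rfl
  clear_value Ω α
  obtain ⟨P, hP⟩ : ∃ P : ℝ, P = -B ^ 2 + A * C - D * E := ⟨_, rfl⟩
  rw [← hP] at hPf
  obtain ⟨N, hNdef⟩ : ∃ N : Matrix (Fin 4) (Fin 4) ℝ,
      N = !![0,D,B,-A; -D,0,C,-B; -B,-C,0,E; A,B,-E,0] := ⟨_, rfl⟩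
  obtain ⟨Y, hYdef⟩ : ∃ Y : Matrix (Fin 4) (Fin 4) ℝ,
      Y = !![B,-A,0,-D; C,-B,D,0; 0,E,B,C; -E,0,-A,-B] := ⟨_, rfl⟩
  -- explicit inverse of Ω
  have hΩ : Ω⁻¹ = !![0,0,-1,0; 0,0,0,-1; 1,0,0,0; 0,1,0,0] := by
    apply Matrix.inv_eq_right_inv
    rw [hΩdef]
    ext i j
    fin_cases i <;> fin_cases j <;>
      norm_num [Matrix.mul_apply, Fin.sum_univ_four, Matrix.one_apply, Fin.ext_iff,
        Matrix.vecHead, Matrix.vecTail, Matrix.cons_val_two, Matrix.cons_val_three]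
  -- α * N = P • 1
  have key : α * N = P • (1 : Matrix (Fin 4) (Fin 4) ℝ) := by
    rw [hαdef, hNdef, hP]
    ext i j
    fin_cases i <;> fin_cases j <;>
      · norm_num [Matrix.mul_apply, Fin.sum_univ_four, Matrix.one_apply, Fin.ext_iff,
          Matrix.vecHead, Matrix.vecTail, Matrix.cons_val_two, Matrix.cons_val_three]
        try ring
  -- explicit inverse of α
  have hα : α⁻¹ = P⁻¹ • N := by
    apply Matrix.inv_eq_right_inv
    rw [Matrix.mul_smul, key, smul_smul, inv_mul_cancel₀ hPf, one_smul]
  have hNΩ : N * Ω = -Y := by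
    rw [hNdef, hΩdef, hYdef]
    ext i j
    fin_cases i <;> fin_cases j <;>
      norm_num [Matrix.mul_apply, Fin.sum_univ_four, Matrix.vecHead, Matrix.vecTail, Matrix.cons_val_two, Matrix.cons_val_three]
  have h1 : α⁻¹ * Ω = (-P⁻¹) • Y := by
    rw [hα, Matrix.smul_mul, hNΩ, smul_neg, neg_smul]
  have h2 : Ω⁻¹ * α = Y := by
    rw [hΩ, hαdef, hYdef]
    ext i j
    fin_cases i <;> fin_cases j <;>
      norm_num [Matrix.mul_apply, Fin.sum_univ_four, Matrix.vecHead, Matrix.vecTail, Matrix.cons_val_two, Matrix.cons_val_three]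
  rw [h1, h2, smul_smul, ← add_smul]
  have hY : Y ≠ 0 := by
    intro h
    apply hPf
    rw [hYdef] at h
    have hB := congrFun (congrFun h 0) 0
    have hA := congrFun (congrFun h 0) 1
    have hD := congrFun (congrFun h 0) 3
    have hC := congrFun (congrFun h 1) 0
    have hE := congrFun (congrFun h 2) 1
    norm_num [Matrix.cons_val_two, Matrix.cons_val_three] at hB hA hD hC hE
    rw [hP, hB, hA, hC, hD, hE]
    ring
  rw [smul_eq_zero]
  constructor
  · rintro (hc | hc)
    · have h3 : ε₂ * P = ε₃ := by
        field_simp at hc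
        linarith [hc]
      rcases hε₂ with h2' | h2' <;> rcases hε₃ with h3' | h3' <;>
        subst h2' <;> subst h3' <;> rw [hP] at h3 <;> linarith [h3]
    · exact absurd hc hY
  · intro h
    left
    have hPval : P = ε₂ * ε₃ := by
      rcases hε₂ with h2' | h2' <;> rcases hε₃ with h3' | h3' <;>
        subst h2' <;> subst h3' <;> rw [hP] <;> nlinarith [h]
    rw [hPval]
    rcases hε₂ with h2' | h2' <;> rcases hε₃ with h3' | h3' <;>
      subst h2' <;> subst h3' <;> norm_num
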